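/- Let C ⊆ F_q^n be a k-dimensional linear code and let G_1, …, G_μ ∈ F_q^{k×n} be generator matrices of C that are systematic with respect to information sets I_1, …, I_μ ⊆ {1,…,n} (i.e., |I_j| = k and the columns of G_j indexed by I_j form the identity matrix, so the projection of C onto the coordinates I_j is bijective). Define the relative ranks r_j = k − |I_j ∩ (I_1 ∪ ⋯ ∪ I_{j−1})|. Then every nonzero codeword c ∈ C either can be written as c = i·G_j for some j ∈ {1,…,μ} and some information vector i ∈ F_q^k with wgt(i) ≤ w, or satisfies wgt(c) ≥ Σ_{j=1}^μ max(0, (w+1) − (k − r_j)). -/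

import Mathlib

/-- **Correctness of the Brouwer–Zimmermann enumeration bound.**
Let `C ⊆ F_q^n` be a `k`-dimensional code with systematic generator matrices
`G_1, …, G_μ` whose information sets are `I_1, …, I_μ` (the columns of `G_j`
indexed by `I_j`, arranged via the injection `e j : Fin k → Fin n`, form the
identity matrix), and let `r_j = k − |I_j ∩ (I_1 ∪ ⋯ ∪ I_{j−1})|` be the
relative ranks.  Then every nonzero codeword `c ∈ C` either equals `i · G_j`
for some `j` and some information vector `i` with `wgt(i) ≤ w`, or satisfies
`wgt(c) ≥ Σ_{j=1}^μ max(0, (w+1) − (k − r_j))`. -/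
theorem brouwer_zimmermann_bound
    {F : Type*} [Field F] [Fintype F] [DecidableEq F]
    (n k μ w : ℕ)
    (C : Submodule F (Fin n → F))
    (hdim : Module.finrank F C = k)
    (G : Fin μ → Matrix (Fin k) (Fin n) F)
    (hgen : ∀ j, Submodule.span F (Set.range fun i => G j i) = C)
    (e : Fin μ → (Fin k → Fin n))
    (he : ∀ j, Function.Injective (e j))
    (hsys : ∀ j, ∀ a b : Fin k, G j a (e j b) = if b = a then (1 : F) else 0)
    (I : Fin μ → Finset (Fin n))
    (hI : ∀ j, I j = Finset.image (e j) Finset.univ)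
    (r : Fin μ → ℕ)
    (hr : ∀ j, r j = k - ((I j) ∩ ((Finset.univ.filter (fun l => l < j)).biUnion I)).card) :
    ∀ c ∈ C, c ≠ 0 →
      (∃ j, ∃ i : Fin k → F, hammingNorm i ≤ w ∧ c = Matrix.vecMul i (G j)) ∨
      (∑ j, max 0 ((w : ℤ) + 1 - ((k : ℤ) - (r j : ℤ)))) ≤ (hammingNorm c : ℤ) := by
  intro c hc hc0
  by_cases hcase : ∃ j, ∃ i : Fin k → F, hammingNorm i ≤ w ∧ c = Matrix.vecMul i (G j)
  · exact Or.inl hcase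
  right
  push_neg at hcase
  classical
  set S : Finset (Fin n) := Finset.univ.filter (fun x => c x ≠ 0) with hS
  have hnorm : hammingNorm c = S.card := rfl
  set U : Fin μ → Finset (Fin n) := fun j => (Finset.univ.filter (fun l => l < j)).biUnion I with hU
  set T : Fin μ → Finset (Fin n) := fun j => (I j \ U j) ∩ S with hT
  -- representation of c w.r.t. each generator matrix
  have hrep : ∀ j, c = Matrix.vecMul (fun b => c (e j b)) (G j) := by
    intro j
    have hmem : c ∈ Submodule.span F (Set.range fun i => G j i) := by rw [hgen j]; exact hc
    obtain ⟨x, hx⟩ := (Submodule.mem_span_range_iff_exists_fun F).mp hmem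
    have hxv : Matrix.vecMul x (G j) = c := by
      funext t
      rw [← hx]
      simp [Matrix.vecMul, dotProduct, Finset.sum_apply]
    have hxi : ∀ b, c (e j b) = x b := by
      intro b
      rw [← hxv]
      simp [Matrix.vecMul, dotProduct, hsys j]
    have hfx : (fun b => c (e j b)) = x := funext hxi
    rw [hfx, hxv]
  -- weight of each information vector is > w
  have hw : ∀ j, w + 1 ≤ (I j ∩ S).card := by
    intro j
    have h1 : w < hammingNorm (fun b => c (e j b)) := by
      by_contra h
      exact hcase j _ (le_of_not_gt h) (hrep j)
    have h2 : hammingNorm (fun b => c (e j b)) = (I j ∩ S).card := by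
      have : I j ∩ S = Finset.image (e j) (Finset.univ.filter (fun b => c (e j b) ≠ 0)) := by
        rw [hI j]
        ext t
        simp only [Finset.mem_inter, Finset.mem_image, Finset.mem_filter, Finset.mem_univ,
          true_and, hS]
        constructor
        · rintro ⟨⟨b, rfl⟩, ht⟩; exact ⟨b, ht, rfl⟩
        · rintro ⟨b, hb, rfl⟩; exact ⟨⟨b, rfl⟩, hb⟩
      rw [this, Finset.card_image_of_injective _ (he j)]
      rfl
    omega
  -- card facts
  have hIcard : ∀ j, (I j).card = k := by
    intro j
    rw [hI j, Finset.card_image_of_injective _ (he j), Finset.card_univ, Fintype.card_fin]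
  have hrk : ∀ j, (r j : ℤ) = (k : ℤ) - (I j ∩ U j).card := by
    intro j
    have hle : (I j ∩ U j).card ≤ k := by
      rw [← hIcard j]; exact Finset.card_le_card (Finset.inter_subset_left)
    have h2 : r j = k - (I j ∩ U j).card := hr j
    omega
  -- per-j bound
  have hperj : ∀ j, max 0 ((w : ℤ) + 1 - ((k : ℤ) - (r j : ℤ))) ≤ ((T j).card : ℤ) := by
    intro j
    have hsub : I j ∩ S ⊆ T j ∪ (I j ∩ U j) := by
      intro t ht
      rw [Finset.mem_inter] at ht
      by_cases htu : t ∈ U j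
      · exact Finset.mem_union_right _ (Finset.mem_inter.mpr ⟨ht.1, htu⟩)
      · exact Finset.mem_union_left _ (Finset.mem_inter.mpr
          ⟨Finset.mem_sdiff.mpr ⟨ht.1, htu⟩, ht.2⟩)
    have hcard : (I j ∩ S).card ≤ (T j).card + (I j ∩ U j).card :=
      le_trans (Finset.card_le_card hsub) (Finset.card_union_le _ _)
    have := hw j
    have := hrk j
    have h0 : (0 : ℤ) ≤ ((T j).card : ℤ) := Int.ofNat_nonneg _
    omega
  -- disjointness of the T j
  have key : ∀ a b : Fin μ, a < b → Disjoint (T a) (T b) := by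
    intro a b hlt
    refine Finset.disjoint_left.mpr ?_
    intro t hta htb
    rw [hT] at hta htb
    simp only [Finset.mem_inter, Finset.mem_sdiff] at hta htb
    apply htb.1.2
    rw [hU]
    refine Finset.mem_biUnion.mpr ⟨a, ?_, hta.1.1⟩
    simp [hlt]
  have hdisj : ((Finset.univ : Finset (Fin μ)) : Set (Fin μ)).PairwiseDisjoint T := by
    intro a _ b _ hab
    rcases lt_or_gt_of_ne hab with h | h
    · exact key a b h
    · exact (key b a h).symm
  have hsum : ∑ j, (T j).card ≤ S.card := by
    rw [← Finset.card_biUnion (fun a ha b hb hab => hdisj ha hb hab)]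
    apply Finset.card_le_card
    intro t ht
    obtain ⟨j, _, htj⟩ := Finset.mem_biUnion.mp ht
    exact (Finset.mem_inter.mp htj).2
  calc (∑ j, max 0 ((w : ℤ) + 1 - ((k : ℤ) - (r j : ℤ))))
      ≤ ∑ j, ((T j).card : ℤ) := Finset.sum_le_sum (fun j _ => hperj j)
    _ = ((∑ j, (T j).card : ℕ) : ℤ) := by push_cast; ring
    _ ≤ (hammingNorm c : ℤ) := by rw [hnorm]; exact_mod_cast hsum
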